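/- Let P be a finite poset with n ≥ 1 elements, let C be a connected component of P of maximal size, and let m be the number of connected components of P other than C that consist of a single element. Then e(P) ≤ n!/(n−m). -/

import Mathlib

/-- The number of linear extensions of a finite poset `P`. -/
noncomputable def extNum (P : Type*) [instF : Fintype P] [instO : PartialOrder P] : ℕ :=
  Nat.card {f : P ≃ Fin (Fintype.card P) // ∀ x y : P, x ≤ y → f x ≤ f y}

/-- The comparability graph of a poset: distinct elements are adjacent iff comparable. -/
def compGraph (P : Type*) [PartialOrder P] : SimpleGraph P where
  Adj x y := x ≠ y ∧ (x ≤ y ∨ y ≤ x)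
  symm := ⟨fun _ _ h => ⟨h.1.symm, h.2.symm⟩⟩
  loopless := ⟨fun _ h => h.1 rfl⟩

open SimpleGraph Finset
open scoped Classical

section Aux

variable {P : Type*} [Fintype P] [PartialOrder P]

private abbrev cmk (x : P) : (compGraph P).ConnectedComponent :=
  (compGraph P).connectedComponentMk x

private lemma exists_cmk (D : (compGraph P).ConnectedComponent) : ∃ x : P, cmk x = D :=
  D.exists_rep

private lemma supp_ncard_pos (D : (compGraph P).ConnectedComponent) : 0 < D.supp.ncard := by
  rw [Set.ncard_pos (Set.toFinite _)]
  obtain ⟨x, hx⟩ := exists_cmk D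
  exact ⟨x, (D.mem_supp_iff x).2 hx⟩

private noncomputable def posFinset (f : P ≃ Fin (Fintype.card P)) (D : (compGraph P).ConnectedComponent) :
    Finset (Fin (Fintype.card P)) := univ.filter (fun a => cmk (f.symm a) = D)

private lemma mem_posFinset {f : P ≃ Fin (Fintype.card P)} {D} {a} :
    a ∈ posFinset f D ↔ cmk (f.symm a) = D := by
  simp [posFinset]

private lemma card_posFinset (f : P ≃ Fin (Fintype.card P)) (D) :
    (posFinset f D).card = D.supp.ncard := by
  rw [Set.ncard_eq_toFinset_card']
  apply Finset.card_bij (fun a _ => f.symm a)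
  · intro a ha
    rw [Set.mem_toFinset, SimpleGraph.ConnectedComponent.mem_supp_iff]
    exact mem_posFinset.1 ha
  · intro a _ b _ h
    exact f.symm.injective h
  · intro x hx
    refine ⟨f x, ?_, by simp⟩
    rw [mem_posFinset, Equiv.symm_apply_apply]
    exact (D.mem_supp_iff x).1 (Set.mem_toFinset.1 hx)

private noncomputable def eIso (f : P ≃ Fin (Fintype.card P))
    (D : (compGraph P).ConnectedComponent) :
    Fin D.supp.ncard ≃o {x // x ∈ posFinset f D} :=
  (posFinset f D).orderIsoOfFin (card_posFinset f D)

private noncomputable def rotFun (f : P ≃ Fin (Fintype.card P))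
    (ρ : ∀ D : (compGraph P).ConnectedComponent, Fin D.supp.ncard)
    (a : Fin (Fintype.card P)) : Fin (Fintype.card P) :=
  ((eIso f (cmk (f.symm a)))
    ((eIso f (cmk (f.symm a))).symm ⟨a, mem_posFinset.2 rfl⟩ + ρ (cmk (f.symm a)))).1

private lemma rotFun_eq (f : P ≃ Fin (Fintype.card P)) (ρ) {a : Fin (Fintype.card P)} {D}
    (hD : cmk (f.symm a) = D) :
    rotFun f ρ a =
      ((eIso f D) ((eIso f D).symm ⟨a, mem_posFinset.2 hD⟩ + ρ D)).1 := by
  subst hD; rfl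

private lemma rotFun_mem (f : P ≃ Fin (Fintype.card P)) (ρ) (a) :
    rotFun f ρ a ∈ posFinset f (cmk (f.symm a)) :=
  ((eIso f (cmk (f.symm a)))
    ((eIso f (cmk (f.symm a))).symm ⟨a, mem_posFinset.2 rfl⟩ + ρ (cmk (f.symm a)))).2

private lemma cmk_rotFun (f : P ≃ Fin (Fintype.card P)) (ρ) (a) :
    cmk (f.symm (rotFun f ρ a)) = cmk (f.symm a) :=
  mem_posFinset.1 (rotFun_mem f ρ a)

private lemma rotFun_rotFun (f : P ≃ Fin (Fintype.card P)) (ρ σ) (a) :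
    rotFun f σ (rotFun f ρ a) =
      ((eIso f (cmk (f.symm a)))
        ((eIso f (cmk (f.symm a))).symm ⟨a, mem_posFinset.2 rfl⟩
          + ρ (cmk (f.symm a)) + σ (cmk (f.symm a)))).1 := by
  have h1 : cmk (f.symm (rotFun f ρ a)) = cmk (f.symm a) := cmk_rotFun f ρ a
  have h2 : (⟨rotFun f ρ a, mem_posFinset.2 h1⟩ : {x // x ∈ posFinset f (cmk (f.symm a))}) =
      (eIso f (cmk (f.symm a)))
        ((eIso f (cmk (f.symm a))).symm ⟨a, mem_posFinset.2 rfl⟩ + ρ (cmk (f.symm a))) :=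
    Subtype.ext (rotFun_eq f ρ rfl)
  rw [rotFun_eq f σ h1, h2, OrderIso.symm_apply_apply]

private noncomputable def rotEquiv (f : P ≃ Fin (Fintype.card P))
    (ρ : ∀ D : (compGraph P).ConnectedComponent, Fin D.supp.ncard) :
    Fin (Fintype.card P) ≃ Fin (Fintype.card P) where
  toFun := rotFun f ρ
  invFun := rotFun f (fun D => -(ρ D))
  left_inv := by
    intro a
    haveI : NeZero ((cmk (f.symm a)).supp.ncard) := ⟨(supp_ncard_pos _).ne'⟩
    rw [rotFun_rotFun f ρ (fun D => -(ρ D)) a, add_neg_cancel_right,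
      OrderIso.apply_symm_apply]
  right_inv := by
    intro a
    haveI : NeZero ((cmk (f.symm a)).supp.ncard) := ⟨(supp_ncard_pos _).ne'⟩
    rw [rotFun_rotFun f (fun D => -(ρ D)) ρ a, neg_add_cancel_right,
      OrderIso.apply_symm_apply]

private noncomputable def Phi :
    ({f : P ≃ Fin (Fintype.card P) // ∀ x y : P, x ≤ y → f x ≤ f y} ×
      ∀ D : (compGraph P).ConnectedComponent, Fin D.supp.ncard) →
    (P ≃ Fin (Fintype.card P)) :=
  fun p => (p.1 : P ≃ Fin (Fintype.card P)).trans (rotEquiv p.1 p.2)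

private lemma boundary {V : Type*} {G : SimpleGraph V} (p : V → Prop) :
    ∀ {a b : V}, G.Walk a b → p a → ¬ p b →
      ∃ u v, G.Adj u v ∧ G.Reachable a u ∧ p u ∧ ¬ p v := by
  intro a b w
  induction w with
  | nil => intro ha hb; exact absurd ha hb
  | @cons x y z h q ih =>
    intro ha hb
    by_cases hy : p y
    · obtain ⟨u, v, h1, h2, h3, h4⟩ := ih hy hb
      exact ⟨u, v, h1, h.reachable.trans h2, h3, h4⟩
    · exact ⟨x, y, h, SimpleGraph.Reachable.refl x, ha, hy⟩

private lemma shift_eq_zero {k : ℕ} [NeZero k]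
    (D : (compGraph P).ConnectedComponent)
    (v : {x : P // x ∈ D.supp} → Fin k) (t : Fin k)
    (hv : ∀ x y : {x : P // x ∈ D.supp}, (x : P) ≤ (y : P) → v x ≤ v y)
    (hv' : ∀ x y : {x : P // x ∈ D.supp}, (x : P) ≤ (y : P) → v x + t ≤ v y + t)
    (hsurj : Function.Surjective v) : t = 0 := by
  classical
  by_contra ht
  have hk : 0 < k := t.pos
  have ht0 : 0 < t.val := Nat.pos_of_ne_zero (fun h0 => ht (by
    apply Fin.ext
    rw [h0, Fin.val_zero]))
  have htk : t.val < k := t.isLt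
  obtain ⟨x0, hx0⟩ := hsurj ⟨k - 1, Nat.sub_lt hk Nat.one_pos⟩
  obtain ⟨y0, hy0⟩ := hsurj ⟨0, hk⟩
  have hx0v : (v x0 : ℕ) = k - 1 := by rw [hx0]
  have hy0v : (v y0 : ℕ) = 0 := by rw [hy0]
  set vv : P → ℕ := fun z => if hz : z ∈ D.supp then (v ⟨z, hz⟩ : ℕ) else 0 with hvv_def
  have hvv : ∀ x : {x : P // x ∈ D.supp}, vv (x : P) = (v x : ℕ) := by
    intro x
    rw [hvv_def]
    simp only [dif_pos x.2]
  have hpy0 : vv (y0 : P) < k - t.val := by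
    rw [hvv y0, hy0v]
    omega
  have hpx0 : ¬ (vv (x0 : P) < k - t.val) := by
    rw [hvv x0, hx0v]
    omega
  have hreach : (compGraph P).Reachable (y0 : P) (x0 : P) :=
    SimpleGraph.ConnectedComponent.exact (by
      rw [(D.mem_supp_iff _).1 y0.2, (D.mem_supp_iff _).1 x0.2])
  obtain ⟨w⟩ := hreach
  obtain ⟨u, z, hadj, hru, hpu, hpz⟩ :=
    boundary (fun z => vv z < k - t.val) w hpy0 hpx0
  have hu : u ∈ D.supp := by
    rw [SimpleGraph.ConnectedComponent.mem_supp_iff]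
    exact (SimpleGraph.ConnectedComponent.sound hru).symm.trans ((D.mem_supp_iff _).1 y0.2)
  have hz' : z ∈ D.supp := by
    rw [SimpleGraph.ConnectedComponent.mem_supp_iff]
    exact (SimpleGraph.ConnectedComponent.sound hadj.reachable).symm.trans
      ((D.mem_supp_iff _).1 hu)
  have hvu : (v ⟨u, hu⟩ : ℕ) < k - t.val := by rw [← hvv ⟨u, hu⟩]; exact hpu
  have hvz : k - t.val ≤ (v ⟨z, hz'⟩ : ℕ) := by
    have := hpz
    rw [show vv z = (v ⟨z, hz'⟩ : ℕ) from hvv ⟨z, hz'⟩] at this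
    omega
  obtain ⟨hne, hcomp⟩ := hadj
  have hik : ((v ⟨u, hu⟩) : ℕ) < k := (v ⟨u, hu⟩).isLt
  have hjk : ((v ⟨z, hz'⟩) : ℕ) < k := (v ⟨z, hz'⟩).isLt
  rcases hcomp with hle | hle
  · have h1 := hv' ⟨u, hu⟩ ⟨z, hz'⟩ hle
    have e1 : ((v ⟨u, hu⟩ + t : Fin k) : ℕ) = (v ⟨u, hu⟩ : ℕ) + t.val := by
      rw [Fin.add_def]
      simp only [Fin.val_mk]
      exact Nat.mod_eq_of_lt (by omega)
    have e2 : ((v ⟨z, hz'⟩ + t : Fin k) : ℕ) = (v ⟨z, hz'⟩ : ℕ) + t.val - k := by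
      rw [Fin.add_def]
      simp only [Fin.val_mk]
      rw [Nat.mod_eq_sub_mod (by omega)]
      exact Nat.mod_eq_of_lt (by omega)
    rw [Fin.le_def, e1, e2] at h1
    omega
  · have h1 := hv ⟨z, hz'⟩ ⟨u, hu⟩ hle
    rw [Fin.le_def] at h1
    omega

private lemma eIso_coe_congr {f f' : P ≃ Fin (Fintype.card P)} {D}
    (h : posFinset f D = posFinset f' D) (i : Fin D.supp.ncard) :
    ((eIso f D i : Fin (Fintype.card P))) = ((eIso f' D i : Fin (Fintype.card P))) := by
  have key : ∀ (s t : Finset (Fin (Fintype.card P))) (_ : s = t)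
      (hs : s.card = D.supp.ncard) (ht : t.card = D.supp.ncard),
      ((s.orderIsoOfFin hs i : Fin (Fintype.card P))) = (t.orderIsoOfFin ht i) := by
    rintro s t rfl hs ht
    rfl
  exact key _ _ h _ _

private lemma eIso_symm_congr {f f' : P ≃ Fin (Fintype.card P)} {D}
    (h : posFinset f D = posFinset f' D) (a : Fin (Fintype.card P))
    (ha : a ∈ posFinset f D) (ha' : a ∈ posFinset f' D) :
    (eIso f D).symm ⟨a, ha⟩ = (eIso f' D).symm ⟨a, ha'⟩ := by
  have key : ∀ (s t : Finset (Fin (Fintype.card P))) (_ : s = t)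
      (hs : s.card = D.supp.ncard) (ht : t.card = D.supp.ncard)
      (hm : a ∈ s) (hm' : a ∈ t),
      (s.orderIsoOfFin hs).symm ⟨a, hm⟩ = (t.orderIsoOfFin ht).symm ⟨a, hm'⟩ := by
    rintro s t rfl hs ht hm hm'
    rfl
  exact key _ _ h _ _ _ _

private lemma phi_inj : Function.Injective (Phi (P := P)) := by
  rintro ⟨⟨f, hf⟩, ρ⟩ ⟨⟨f', hf'⟩, ρ'⟩ hEq
  simp only [Phi] at hEq
  have hcmk : ∀ a : Fin (Fintype.card P), cmk (f.symm a) = cmk (f'.symm a) := by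
    intro a
    have h1 : cmk ((f.trans (rotEquiv f ρ)).symm a) = cmk (f.symm a) :=
      cmk_rotFun f (fun D => -(ρ D)) a
    have h2 : cmk ((f'.trans (rotEquiv f' ρ')).symm a) = cmk (f'.symm a) :=
      cmk_rotFun f' (fun D => -(ρ' D)) a
    rw [hEq] at h1
    exact (h1.symm.trans h2)
  have hpos : ∀ D, posFinset f D = posFinset f' D := by
    intro D
    ext a
    simp only [posFinset, mem_filter]
    rw [hcmk a]
  -- membership helpers
  have memf : ∀ (D) (x : P), x ∈ D.supp → f x ∈ posFinset f D := by
    intro D x hx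
    rw [mem_posFinset, Equiv.symm_apply_apply]
    exact (D.mem_supp_iff x).1 hx
  have memf' : ∀ (D) (x : P), x ∈ D.supp → f' x ∈ posFinset f D := by
    intro D x hx
    rw [hpos D, mem_posFinset, Equiv.symm_apply_apply]
    exact (D.mem_supp_iff x).1 hx
  -- the key pointwise equation
  have key : ∀ (D) (x : P) (hx : x ∈ D.supp),
      (eIso f D).symm ⟨f x, memf D x hx⟩ + ρ D =
      (eIso f D).symm ⟨f' x, memf' D x hx⟩ + ρ' D := by
    intro D x hx
    have hDx : cmk (f.symm (f x)) = D := by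
      rw [Equiv.symm_apply_apply]; exact (D.mem_supp_iff x).1 hx
    have hDx' : cmk (f'.symm (f' x)) = D := by
      rw [Equiv.symm_apply_apply]; exact (D.mem_supp_iff x).1 hx
    have hx1 : (f.trans (rotEquiv f ρ)) x = (f'.trans (rotEquiv f' ρ')) x := by rw [hEq]
    have hL : (f.trans (rotEquiv f ρ)) x =
        ((eIso f D) ((eIso f D).symm ⟨f x, mem_posFinset.2 hDx⟩ + ρ D)).1 :=
      rotFun_eq f ρ hDx
    have hR : (f'.trans (rotEquiv f' ρ')) x =
        ((eIso f' D) ((eIso f' D).symm ⟨f' x, mem_posFinset.2 hDx'⟩ + ρ' D)).1 :=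
      rotFun_eq f' ρ' hDx'
    have hR2 : ((eIso f' D) ((eIso f' D).symm ⟨f' x, mem_posFinset.2 hDx'⟩ + ρ' D)).1 =
        ((eIso f D) ((eIso f D).symm ⟨f' x, memf' D x hx⟩ + ρ' D)).1 := by
      rw [eIso_symm_congr (hpos D) (f' x) (memf' D x hx) (mem_posFinset.2 hDx')]
      exact (eIso_coe_congr (hpos D) _).symm
    have hfin : ((eIso f D) ((eIso f D).symm ⟨f x, mem_posFinset.2 hDx⟩ + ρ D)).1 =
        ((eIso f D) ((eIso f D).symm ⟨f' x, memf' D x hx⟩ + ρ' D)).1 := by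
      rw [← hL, hx1, hR, hR2]
    exact (eIso f D).injective (Subtype.ext hfin)
  -- per-component: define v and apply shift lemma
  have hrho : ∀ D, ρ D = ρ' D := by
    intro D
    haveI : NeZero (D.supp.ncard) := ⟨(supp_ncard_pos D).ne'⟩
    set v : {x : P // x ∈ D.supp} → Fin D.supp.ncard :=
      fun x => (eIso f D).symm ⟨f x, memf D x x.2⟩ with hvdef
    set v' : {x : P // x ∈ D.supp} → Fin D.supp.ncard :=
      fun x => (eIso f D).symm ⟨f' x, memf' D x x.2⟩ with hvdef'
    have hvv' : ∀ x, v' x = v x + (ρ D - ρ' D) := by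
      intro x
      have := key D x x.2
      have h2 : v x + ρ D = v' x + ρ' D := this
      have : v x + ρ D - ρ' D = v' x := by rw [h2]; exact add_sub_cancel_right _ _
      rw [← this]
      abel
    have hvmono : ∀ x y : {x : P // x ∈ D.supp}, (x : P) ≤ (y : P) → v x ≤ v y := by
      intro x y hxy
      exact ((eIso f D).symm.le_iff_le).2 (Subtype.mk_le_mk.2 (hf _ _ hxy))
    have hvmono' : ∀ x y : {x : P // x ∈ D.supp}, (x : P) ≤ (y : P) →
        v x + (ρ D - ρ' D) ≤ v y + (ρ D - ρ' D) := by
      intro x y hxy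
      rw [← hvv' x, ← hvv' y]
      exact ((eIso f D).symm.le_iff_le).2 (Subtype.mk_le_mk.2 (hf' _ _ hxy))
    have hvsurj : Function.Surjective v := by
      intro j
      have haj : ((eIso f D j : Fin (Fintype.card P))) ∈ posFinset f D := (eIso f D j).2
      have hxj : (f.symm (eIso f D j) : P) ∈ D.supp := by
        rw [SimpleGraph.ConnectedComponent.mem_supp_iff]
        exact mem_posFinset.1 haj
      refine ⟨⟨f.symm (eIso f D j), hxj⟩, ?_⟩
      have : (⟨f (f.symm (eIso f D j)), memf D _ hxj⟩ : {x // x ∈ posFinset f D}) =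
          eIso f D j := Subtype.ext (f.apply_symm_apply _)
      simp only [hvdef, this, OrderIso.symm_apply_apply]
    have := shift_eq_zero D v (ρ D - ρ' D) hvmono hvmono' hvsurj
    have h0 := sub_eq_zero.1 this
    exact h0
  have hff' : f = f' := by
    apply Equiv.ext
    intro x
    set D := cmk x with hD
    have hx : x ∈ D.supp := (D.mem_supp_iff x).2 rfl
    have hk := key D x hx
    rw [hrho D] at hk
    have := add_right_cancel hk
    have := (eIso f D).symm.injective this
    exact Subtype.ext_iff.1 this
  subst hff'
  have : ρ = ρ' := funext hrho
  subst this
  rfl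

private lemma card_bound [Fintype ((compGraph P).ConnectedComponent)] :
    extNum P * ∏ D : (compGraph P).ConnectedComponent, D.supp.ncard ≤
      (Fintype.card P).factorial := by
  letI : DecidableEq P := Classical.decEq P
  have h := Nat.card_le_card_of_injective _ (phi_inj (P := P))
  rw [Nat.card_prod, Nat.card_pi] at h
  simp only [Nat.card_eq_fintype_card, Fintype.card_fin] at h
  rw [Fintype.card_equiv (Fintype.equivFin P)] at h
  have hext : Nat.card {f : P ≃ Fin (Fintype.card P) // ∀ x y : P, x ≤ y → f x ≤ f y} =
      extNum P := rfl
  rw [Nat.card_eq_fintype_card] at hext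
  rw [hext] at h
  exact h

private lemma sum_le_prod_of_two_le {ι : Type*} (s : Finset ι) (g : ι → ℕ)
    (h : ∀ i ∈ s, 2 ≤ g i) : ∑ i ∈ s, g i ≤ ∏ i ∈ s, g i := by
  classical
  induction s using Finset.induction_on with
  | empty => simp
  | @insert a s ha ih =>
    rw [sum_insert ha, prod_insert ha]
    have h2 : ∀ i ∈ s, 2 ≤ g i := fun i hi => h i (mem_insert_of_mem hi)
    have hs := ih h2
    have hfa : 2 ≤ g a := h a (mem_insert_self _ _)
    have hpos : 0 < ∏ i ∈ s, g i :=
      Finset.prod_pos (fun i hi => by have := h2 i hi; omega)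
    rcases Nat.lt_or_ge (∏ i ∈ s, g i) 2 with hq | hq
    · rcases s.eq_empty_or_nonempty with rfl | ⟨i, hi⟩
      · simp
      · exfalso
        have h1 : 2 ≤ ∑ i ∈ s, g i :=
          le_trans (h2 i hi) (Finset.single_le_sum (fun _ _ => Nat.zero_le _) hi)
        omega
    · obtain ⟨q', hq'⟩ : ∃ q', ∏ i ∈ s, g i = q' + 1 := ⟨(∏ i ∈ s, g i) - 1, by omega⟩
      have h3 : 2 * q' ≤ g a * q' := Nat.mul_le_mul_right q' hfa
      have h4 : g a * (q' + 1) = g a * q' + g a := by ring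
      rw [hq'] at hs ⊢
      rw [h4]
      omega

private lemma card_eq_sum_comp [Fintype ((compGraph P).ConnectedComponent)] :
    Fintype.card P = ∑ D : (compGraph P).ConnectedComponent, D.supp.ncard := by
  rw [← Finset.card_univ,
    Finset.card_eq_sum_card_fiberwise (f := fun x : P => cmk x)
      (fun x _ => Finset.mem_univ (cmk x))]
  apply Finset.sum_congr rfl
  intro D _
  rw [Set.ncard_eq_toFinset_card']
  congr 1
  ext x
  simp [Set.mem_toFinset, SimpleGraph.ConnectedComponent.mem_supp_iff]

end Aux

/-- Let `P` be a finite poset on `n ≥ 1` elements, `C` a connected component of maximal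
size, and `m` the number of singleton components other than `C`.
Then `e(P) ≤ n! / (n - m)`. -/
theorem statement7 (P : Type*) [Fintype P] [PartialOrder P]
    (hn : 1 ≤ Fintype.card P)
    (C : (compGraph P).ConnectedComponent)
    (hC : ∀ D : (compGraph P).ConnectedComponent, D.supp.ncard ≤ C.supp.ncard) :
    (extNum P : ℚ) ≤ (Nat.factorial (Fintype.card P) : ℚ) /
      ((Fintype.card P : ℚ) -
        (({D : (compGraph P).ConnectedComponent | D ≠ C ∧ D.supp.ncard = 1}).ncard : ℚ)) := by
  classical
  haveI : Fintype ((compGraph P).ConnectedComponent) := Fintype.ofFinite _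
  set n := Fintype.card P with hn_def
  set m := ({D : (compGraph P).ConnectedComponent | D ≠ C ∧ D.supp.ncard = 1}).ncard with hm_def
  set pSing : (compGraph P).ConnectedComponent → Prop :=
    fun D => D ≠ C ∧ D.supp.ncard = 1 with hpSing
  have hm : m = (univ.filter pSing).card := by
    rw [hm_def, Set.ncard_eq_toFinset_card']
    congr 1
    ext D
    simp [hpSing, Set.mem_toFinset]
  have hsum : n = ∑ D : (compGraph P).ConnectedComponent, D.supp.ncard := card_eq_sum_comp
  have hprod_bound : extNum P * ∏ D : (compGraph P).ConnectedComponent, D.supp.ncard ≤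
      n.factorial := card_bound
  -- split sums/products
  have hsplit : (∑ D ∈ univ.filter pSing, D.supp.ncard) +
      (∑ D ∈ univ.filter (fun D => ¬ pSing D), D.supp.ncard) =
      ∑ D : (compGraph P).ConnectedComponent, D.supp.ncard :=
    Finset.sum_filter_add_sum_filter_not _ _ _
  have hS1sum : ∑ D ∈ univ.filter pSing, D.supp.ncard = m := by
    rw [hm]
    rw [Finset.sum_congr rfl (fun D hD => (Finset.mem_filter.1 hD).2.2)]
    simp
  have hS1prod : ∏ D ∈ univ.filter pSing, D.supp.ncard = 1 :=
    Finset.prod_eq_one (fun D hD => (Finset.mem_filter.1 hD).2.2)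
  have hprodsplit : (∏ D ∈ univ.filter pSing, D.supp.ncard) *
      (∏ D ∈ univ.filter (fun D => ¬ pSing D), D.supp.ncard) =
      ∏ D : (compGraph P).ConnectedComponent, D.supp.ncard :=
    Finset.prod_filter_mul_prod_filter_not _ _ _
  have hS2 : (∑ D ∈ univ.filter (fun D => ¬ pSing D), D.supp.ncard) ≤
      (∏ D ∈ univ.filter (fun D => ¬ pSing D), D.supp.ncard) := by
    by_cases hC1 : C.supp.ncard = 1
    · have hall : ∀ D : (compGraph P).ConnectedComponent, D.supp.ncard = 1 := by
        intro D
        have h1 := hC D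
        have h2 := supp_ncard_pos D
        omega
      have hset : univ.filter (fun D => ¬ pSing D) = {C} := by
        ext D
        simp only [mem_filter, mem_univ, true_and, mem_singleton, hpSing, hall D]
        tauto
      rw [hset]
      simp
    · apply sum_le_prod_of_two_le
      intro D hD
      rw [Finset.mem_filter] at hD
      have h1 := supp_ncard_pos D
      rcases eq_or_ne D C with rfl | hne
      · omega
      · have := hD.2
        rw [hpSing] at this
        simp only [hne, ne_eq, not_false_iff, true_and] at this
        omega
  have hCmem : C ∈ univ.filter (fun D => ¬ pSing D) := by
    simp [hpSing]
  have hCle : C.supp.ncard ≤ ∑ D ∈ univ.filter (fun D => ¬ pSing D), D.supp.ncard :=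
    Finset.single_le_sum (f := fun D : (compGraph P).ConnectedComponent => D.supp.ncard)
      (fun _ _ => Nat.zero_le _) hCmem
  have hCpos := supp_ncard_pos C
  have hkey1 : n ≤ m + ∏ D : (compGraph P).ConnectedComponent, D.supp.ncard := by
    rw [← hprodsplit, hS1prod, one_mul]
    omega
  have hkey2 : m + 1 ≤ n := by omega
  -- rational arithmetic
  have hd : (0 : ℚ) < (n : ℚ) - (m : ℚ) := by
    have : (m : ℚ) + 1 ≤ (n : ℚ) := by exact_mod_cast hkey2
    linarith
  rw [le_div_iff₀ hd]
  have c1 : ((n : ℚ) - (m : ℚ)) ≤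
      ((∏ D : (compGraph P).ConnectedComponent, D.supp.ncard : ℕ) : ℚ) := by
    have : (n : ℚ) ≤ (m : ℚ) +
        ((∏ D : (compGraph P).ConnectedComponent, D.supp.ncard : ℕ) : ℚ) := by
      exact_mod_cast hkey1
    linarith
  calc (extNum P : ℚ) * ((n : ℚ) - (m : ℚ))
      ≤ (extNum P : ℚ) * ((∏ D : (compGraph P).ConnectedComponent, D.supp.ncard : ℕ) : ℚ) :=
        mul_le_mul_of_nonneg_left c1 (by positivity)
    _ ≤ (n.factorial : ℚ) := by exact_mod_cast hprod_bound
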